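/- Let ρ be a positive semidefinite complex matrix on ℂ²⊗ℂᵐ (indexed by Fin 2 × Fin m) whose partial transpose ρ^{t_A} is also positive semidefinite. If e ∈ ℂ² and φ ∈ ℂᵐ satisfy ρ (e⊗φ) = 0, then ρ^{t_A} (ē⊗φ) = 0, where ē denotes the entrywise complex conjugate of e. -/
import Mathlib

open Matrix ComplexOrder

noncomputable section

/-- Partial transpose of a `2 × m` bipartite matrix with respect to the first factor. -/
def ptA2 {m : ℕ} (ρ : Matrix (Fin 2 × Fin m) (Fin 2 × Fin m) ℂ) :
    Matrix (Fin 2 × Fin m) (Fin 2 × Fin m) ℂ :=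
  fun x y => ρ (y.1, x.2) (x.1, y.2)

/-- If a PPT state kills a product vector `e ⊗ φ`, then its partial transpose kills
`ē ⊗ φ`. -/
theorem ppt_kernel_product_conj (m : ℕ)
    (ρ : Matrix (Fin 2 × Fin m) (Fin 2 × Fin m) ℂ)
    (hpos : ρ.PosSemidef) (hppt : (ptA2 ρ).PosSemidef)
    (e : Fin 2 → ℂ) (φ : Fin m → ℂ)
    (h : ρ.mulVec (fun x : Fin 2 × Fin m => e x.1 * φ x.2) = 0) :
    (ptA2 ρ).mulVec (fun x : Fin 2 × Fin m => star (e x.1) * φ x.2) = 0 := by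
  set w : Fin 2 × Fin m → ℂ := fun x => e x.1 * φ x.2 with hw
  set v : Fin 2 × Fin m → ℂ := fun x => star (e x.1) * φ x.2 with hv
  rw [← hppt.dotProduct_mulVec_zero_iff]
  have key : star v ⬝ᵥ (ptA2 ρ) *ᵥ v = star w ⬝ᵥ ρ *ᵥ w := by
    have lhs : (∑ pq : (Fin 2 × Fin m) × (Fin 2 × Fin m),
            star (v pq.1) * (ρ (pq.2.1, pq.1.2) (pq.1.1, pq.2.2) * v pq.2))
        = star v ⬝ᵥ (ptA2 ρ) *ᵥ v := by
      rw [Fintype.sum_prod_type]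
      simp only [dotProduct, mulVec, ptA2, Finset.mul_sum, Pi.star_apply]
    have rhs : (∑ pq : (Fin 2 × Fin m) × (Fin 2 × Fin m),
            star (w pq.1) * (ρ pq.1 pq.2 * w pq.2))
        = star w ⬝ᵥ ρ *ᵥ w := by
      rw [Fintype.sum_prod_type]
      simp only [dotProduct, mulVec, Finset.mul_sum, Pi.star_apply]
    rw [← lhs, ← rhs]
    refine Fintype.sum_equiv
      ⟨fun pq => ((pq.2.1, pq.1.2), (pq.1.1, pq.2.2)),
       fun pq => ((pq.2.1, pq.1.2), (pq.1.1, pq.2.2)),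
       fun pq => rfl, fun pq => rfl⟩ _ _ (fun pq => ?_)
    simp only [Equiv.coe_fn_mk, hv, hw, star_mul', star_star]
    ring
  rw [key, h, dotProduct_zero]

end
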